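/- Any hypergraph H with fewer than m·(m−1)/2 hyperedges admits a conflict-free coloring with fewer than m colors. -/

import Mathlib

open Finset

section CF

variable {V : Type*} [DecidableEq V]

private lemma kill_lemma (E : Finset (Finset V)) (t : ℕ)
    (ht1 : 1 ≤ t) (htm : t ≤ E.card)
    (hE2 : ∀ e ∈ E, 2 ≤ e.card)
    (hmt : t * t + t ≤ 2 * E.card + 2) :
    ∃ T : Finset V, (∀ e ∈ E, (e ∩ T).Nonempty) ∧
      t ≤ (E.filter (fun e => (e ∩ T).card = 1 ∨ (e \ T).card = 1)).card := by
  classical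
  set U : Finset V := E.biUnion id with hU
  have hsubU : ∀ e ∈ E, e ⊆ U := fun e he => subset_biUnion_of_mem id he
  by_cases hdeg : ∃ v, t ≤ (E.filter (fun e => v ∈ e)).card
  · obtain ⟨v, hv⟩ := hdeg
    refine ⟨U.erase v, ?_, ?_⟩
    · intro e he
      obtain ⟨x, hx, y, hy, hxy⟩ := one_lt_card.mp (hE2 e he)
      rcases eq_or_ne x v with rfl | hne
      · exact ⟨y, mem_inter.2 ⟨hy, mem_erase.2 ⟨fun h => hxy h.symm, hsubU e he hy⟩⟩⟩
      · exact ⟨x, mem_inter.2 ⟨hx, mem_erase.2 ⟨hne, hsubU e he hx⟩⟩⟩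
    · refine le_trans hv (card_le_card ?_)
      intro e he
      rw [mem_filter] at he ⊢
      refine ⟨he.1, Or.inr ?_⟩
      have : e \ U.erase v = {v} := by
        ext w
        simp only [mem_sdiff, mem_erase, mem_singleton, not_and]
        constructor
        · rintro ⟨hwe, hw⟩
          by_contra hwv
          exact (hw hwv) (hsubU e he.1 hwe)
        · rintro rfl
          exact ⟨he.2, fun h _ => absurd rfl h⟩
      rw [this, card_singleton]
  · push_neg at hdeg
    have hEne : E.Nonempty := card_pos.mp (lt_of_lt_of_le ht1 htm)
    set 𝒯 := U.powerset.filter (fun T => ∀ e ∈ E, (e ∩ T).Nonempty) with h𝒯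
    have hU𝒯 : U ∈ 𝒯 := by
      refine mem_filter.2 ⟨mem_powerset_self U, fun e he => ?_⟩
      obtain ⟨x, hx⟩ := card_pos.mp (show 0 < e.card by have := hE2 e he; omega)
      exact ⟨x, mem_inter.2 ⟨hx, hsubU e he hx⟩⟩
    obtain ⟨T, hT𝒯, hTmin⟩ := 𝒯.exists_min_image card ⟨U, hU𝒯⟩
    have hTtrans : ∀ e ∈ E, (e ∩ T).Nonempty := (mem_filter.mp hT𝒯).2
    have hTU : T ⊆ U := mem_powerset.mp (mem_filter.mp hT𝒯).1
    have hpriv : ∀ v ∈ T, ∃ e ∈ E, e ∩ T = {v} := by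
      intro v hv
      by_contra hcon
      push_neg at hcon
      have htr : T.erase v ∈ 𝒯 := by
        refine mem_filter.2 ⟨mem_powerset.2 ((erase_subset v T).trans hTU), fun e he => ?_⟩
        have hsub : ¬ (e ∩ T ⊆ {v}) := by
          intro hsub
          rcases (subset_singleton_iff.mp hsub) with hemp | heq
          · exact (hTtrans e he).ne_empty hemp
          · exact hcon e he heq
        obtain ⟨u, hu, huv⟩ := not_subset.mp hsub
        rw [mem_singleton] at huv
        have := mem_inter.mp hu
        exact ⟨u, mem_inter.2 ⟨this.1, mem_erase.2 ⟨huv, this.2⟩⟩⟩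
      have h1 := hTmin _ htr
      rw [card_erase_of_mem hv] at h1
      have h2 : 0 < T.card := card_pos.mpr ⟨v, hv⟩
      omega
    set K1 := E.filter (fun e => (e ∩ T).card = 1) with hK1
    have hK1sub : K1 ⊆ E.filter (fun e => (e ∩ T).card = 1 ∨ (e \ T).card = 1) := by
      intro e he
      rw [mem_filter] at he ⊢
      exact ⟨he.1, Or.inl he.2⟩
    have hTK1 : T.card ≤ K1.card := by
      choose g hg1 hg2 using hpriv
      refine card_le_card_of_injOn (fun v => if h : v ∈ T then g v h else ∅) ?_ ?_
      · intro v hv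
        simp only [mem_coe] at hv
        simp only [dif_pos hv]
        refine mem_filter.2 ⟨hg1 v hv, ?_⟩
        rw [hg2 v hv, card_singleton]
      · intro v hv w hw hvw
        simp only [mem_coe] at hv hw
        simp only [dif_pos hv, dif_pos hw] at hvw
        have : ({v} : Finset V) = {w} := by rw [← hg2 v hv, ← hg2 w hw, hvw]
        exact singleton_injective this
    have hsum1 : ∑ e ∈ E, (e ∩ T).card = ∑ v ∈ T, (E.filter (fun e => v ∈ e)).card := by
      have h1 : ∀ e ∈ E, (e ∩ T).card = ∑ v ∈ T, if v ∈ e then 1 else 0 := by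
        intro e _
        rw [inter_comm, ← filter_mem_eq_inter, card_filter]
      have h2 : ∀ v ∈ T, (E.filter (fun e => v ∈ e)).card = ∑ e ∈ E, if v ∈ e then 1 else 0 := by
        intro v _
        rw [card_filter]
      rw [Finset.sum_congr rfl h1, Finset.sum_congr rfl h2, Finset.sum_comm]
    have hsum2 : ∑ e ∈ E, (e ∩ T).card + T.card ≤ T.card * t := by
      rw [hsum1]
      calc ∑ v ∈ T, (E.filter (fun e => v ∈ e)).card + T.card
          = ∑ v ∈ T, ((E.filter (fun e => v ∈ e)).card + 1) := by
            rw [Finset.sum_add_distrib, Finset.sum_const, smul_eq_mul, mul_one]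
        _ ≤ ∑ _v ∈ T, t := Finset.sum_le_sum (fun v _ => hdeg v)
        _ = T.card * t := by rw [Finset.sum_const, smul_eq_mul]
    have hsum3 : 2 * E.card ≤ ∑ e ∈ E, (e ∩ T).card + K1.card := by
      have : K1.card = ∑ e ∈ E, if (e ∩ T).card = 1 then 1 else 0 := card_filter _ _
      rw [this, ← Finset.sum_add_distrib]
      calc 2 * E.card = ∑ _e ∈ E, 2 := by rw [Finset.sum_const, smul_eq_mul, mul_comm]
        _ ≤ ∑ e ∈ E, ((e ∩ T).card + if (e ∩ T).card = 1 then 1 else 0) := by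
            refine Finset.sum_le_sum (fun e he => ?_)
            have h1 : 1 ≤ (e ∩ T).card := card_pos.mpr (hTtrans e he)
            by_cases hc : (e ∩ T).card = 1
            · rw [if_pos hc]; omega
            · rw [if_neg hc]; omega
    by_cases hTt : t ≤ T.card
    · exact ⟨T, hTtrans, le_trans (le_trans hTt hTK1) (card_le_card hK1sub)⟩
    · push_neg at hTt
      have hTc1 : 1 ≤ T.card := by
        obtain ⟨e, he⟩ := hEne
        obtain ⟨x, hx⟩ := hTtrans e he
        exact card_pos.mpr ⟨x, (mem_inter.mp hx).2⟩
      have hPQ : T.card * t + t ≤ t * t := by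
        have := Nat.mul_le_mul_right t hTt
        calc T.card * t + t = (T.card + 1) * t := by ring
          _ ≤ t * t := Nat.mul_le_mul_right t hTt
      refine ⟨T, hTtrans, le_trans ?_ (card_le_card hK1sub)⟩
      linarith [hsum2, hsum3, hmt, hPQ, hTc1]

private lemma cf_aux (k : ℕ) :
    ∀ (E : Finset (Finset V)),
      2 * (E.filter (fun e => 2 ≤ e.card)).card < k * (k + 1) →
      ∃ ψ : V → Fin k, ∀ e ∈ E, e.Nonempty → ∃ x ∈ e, ∀ y ∈ e, y ≠ x → ψ y ≠ ψ x := by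
  induction k with
  | zero => intro E hE; omega
  | succ k ih =>
    intro E hE
    set E₂ := E.filter (fun e => 2 ≤ e.card) with hE₂def
    by_cases hsmall : 2 * E₂.card < k * (k + 1)
    · obtain ⟨ψ', hψ'⟩ := ih E hsmall
      refine ⟨fun v => (ψ' v).castSucc, fun e he hne => ?_⟩
      obtain ⟨x, hx, hux⟩ := hψ' e he hne
      exact ⟨x, hx, fun y hy hyx h => hux y hy hyx (Fin.castSucc_injective _ h)⟩
    · push_neg at hsmall
      by_cases hm0 : E₂.card = 0
      · refine ⟨fun _ => 0, fun e he hne => ?_⟩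
        obtain ⟨x, hx⟩ := hne
        have h2 : ¬ 2 ≤ e.card := by
          intro h2
          have : e ∈ E₂ := mem_filter.2 ⟨he, h2⟩
          rw [card_eq_zero] at hm0
          rw [hm0] at this
          exact absurd this (notMem_empty e)
        have h1 : 0 < e.card := card_pos.mpr ⟨x, hx⟩
        have hcard : e.card = 1 := by omega
        obtain ⟨z, hz⟩ := card_eq_one.mp hcard
        refine ⟨x, hx, fun y hy hyx => absurd ?_ hyx⟩
        rw [hz, mem_singleton] at hx hy
        rw [hx, hy]
      · have hk1 : 1 ≤ k := by
          rcases Nat.eq_zero_or_pos k with rfl | h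
          · exfalso
            have h01 : (0 + 1) * (0 + 1 + 1) = 2 := by norm_num
            rw [h01] at hE
            omega
          · exact h
        obtain ⟨q, hq⟩ := Nat.even_mul_succ_self k
        have hq2 : 2 * q = k * (k + 1) := by omega
        have hq1 : 1 ≤ q := by nlinarith
        set t := E₂.card + 1 - q with htdef
        have ht : t + q = E₂.card + 1 := by omega
        have htk : t ≤ k + 1 := by
          have hexp : (k + 1) * (k + 1 + 1) = k * (k + 1) + 2 * (k + 1) := by ring
          omega
        have hmt : t * t + t ≤ 2 * E₂.card + 2 := by nlinarith
        have hE2mem : ∀ e ∈ E₂, 2 ≤ e.card := fun e he => (mem_filter.mp he).2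
        obtain ⟨T, hTtrans, hTkill⟩ := kill_lemma E₂ t (by omega) (by omega) hE2mem hmt
        set E' := (E₂.filter (fun e => ¬((e ∩ T).card = 1 ∨ (e \ T).card = 1))).image
          (fun e => e ∩ T) with hE'def
        have hrec : 2 * (E'.filter (fun e => 2 ≤ e.card)).card < k * (k + 1) := by
          have h1 : (E'.filter (fun e => 2 ≤ e.card)).card ≤ E'.card := card_filter_le _ _
          have h2 : E'.card ≤ (E₂.filter (fun e => ¬((e ∩ T).card = 1 ∨ (e \ T).card = 1))).card :=
            card_image_le
          have h3 := card_filter_add_card_filter_not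
            (s := E₂) (p := fun e => (e ∩ T).card = 1 ∨ (e \ T).card = 1)
          omega
        obtain ⟨ψ', hψ'⟩ := ih E' hrec
        refine ⟨fun v => if v ∈ T then (ψ' v).castSucc else Fin.last k, fun e he hne => ?_⟩
        by_cases h2 : 2 ≤ e.card
        · have heE₂ : e ∈ E₂ := mem_filter.2 ⟨he, h2⟩
          by_cases hk1e : (e ∩ T).card = 1
          · obtain ⟨x, hx⟩ := card_eq_one.mp hk1e
            have hxm : x ∈ e ∩ T := by rw [hx]; exact mem_singleton_self x
            obtain ⟨hxe, hxT⟩ := mem_inter.mp hxm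
            refine ⟨x, hxe, fun y hy hyx => ?_⟩
            have hyT : y ∉ T := by
              intro hyT
              have : y ∈ e ∩ T := mem_inter.2 ⟨hy, hyT⟩
              rw [hx, mem_singleton] at this
              exact hyx this
            simp only [if_pos hxT, if_neg hyT]
            exact (Fin.castSucc_lt_last _).ne'
          · by_cases hk2e : (e \ T).card = 1
            · obtain ⟨x, hx⟩ := card_eq_one.mp hk2e
              have hxm : x ∈ e \ T := by rw [hx]; exact mem_singleton_self x
              obtain ⟨hxe, hxT⟩ := mem_sdiff.mp hxm
              refine ⟨x, hxe, fun y hy hyx => ?_⟩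
              have hyT : y ∈ T := by
                by_contra hyT
                have : y ∈ e \ T := mem_sdiff.2 ⟨hy, hyT⟩
                rw [hx, mem_singleton] at this
                exact hyx this
              simp only [if_pos hyT, if_neg hxT]
              exact (Fin.castSucc_lt_last _).ne
            · have hmemE' : e ∩ T ∈ E' := by
                refine mem_image.2 ⟨e, mem_filter.2 ⟨heE₂, ?_⟩, rfl⟩
                push_neg
                exact ⟨hk1e, hk2e⟩
              obtain ⟨x, hx, hux⟩ := hψ' _ hmemE' (hTtrans e heE₂)
              obtain ⟨hxe, hxT⟩ := mem_inter.mp hx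
              refine ⟨x, hxe, fun y hy hyx => ?_⟩
              by_cases hyT : y ∈ T
              · simp only [if_pos hyT, if_pos hxT]
                intro hcs
                exact hux y (mem_inter.2 ⟨hy, hyT⟩) hyx (Fin.castSucc_injective _ hcs)
              · simp only [if_neg hyT, if_pos hxT]
                exact (Fin.castSucc_lt_last _).ne'
        · obtain ⟨x, hx⟩ := hne
          have h1 : 0 < e.card := card_pos.mpr ⟨x, hx⟩
          have hcard : e.card = 1 := by omega
          obtain ⟨z, hz⟩ := card_eq_one.mp hcard
          refine ⟨x, hx, fun y hy hyx => absurd ?_ hyx⟩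
          rw [hz, mem_singleton] at hx hy
          rw [hx, hy]

end CF

/-- Any hypergraph with fewer than `m·(m−1)/2` hyperedges admits a conflict-free coloring
with fewer than `m` colors: there is `k < m` and a coloring `ψ : V → Fin k` such that every
nonempty hyperedge contains a vertex whose color is unique in that hyperedge. -/
theorem cf_coloring_of_few_hyperedges {V : Type*} [DecidableEq V]
    (E : Finset (Finset V)) (m : ℕ) (h : E.card < m * (m - 1) / 2) :
    ∃ k < m, ∃ ψ : V → Fin k,
      ∀ e ∈ E, e.Nonempty → ∃ x ∈ e, ∀ y ∈ e, y ≠ x → ψ y ≠ ψ x := by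
  have hm2 : 2 ≤ m := by
    by_contra hc
    push_neg at hc
    interval_cases m <;> simp_all
  refine ⟨m - 1, by omega, ?_⟩
  apply cf_aux
  have h1 : (E.filter (fun e => 2 ≤ e.card)).card ≤ E.card := Finset.card_filter_le _ _
  have h3 : m * (m - 1) / 2 * 2 ≤ m * (m - 1) := Nat.div_mul_le_self _ 2
  have h4 : (m - 1) * (m - 1 + 1) = m * (m - 1) := by
    have hm : m - 1 + 1 = m := by omega
    rw [hm, Nat.mul_comm]
  omega
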